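/- Opponent model improvement theorem: fix a conditional policy π and an opponent model ρ, and let Q_{π,ρ} be the unique fixed point of the policy-evaluation operator 𝒯_{π,ρ}. Define the improved opponent model ρ̃(s,b) ∝ P(s,b)·exp( ∑_a π(s,b,a)·(Q_{π,ρ}(s,a,b) − α·log π(s,b,a)) ), normalized so that ∑_b ρ̃(s,b) = 1 for every s. Then the unique fixed point Q_{π,ρ̃} of 𝒯_{π,ρ̃} satisfies Q_{π,ρ̃}(s,a,b) ≥ Q_{π,ρ}(s,a,b) for all (s,a,b). -/

import Mathlib

/-- The policy-evaluation operator
(𝒯_{π,ρ}Q)(s,a,b) = R(s,a,b) + γ·∑_{s'} p(s,a,b,s')·( ∑_{b'} ρ(s',b')·( ∑_{a'}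
π(s',b',a')·(Q(s',a',b') − α·log π(s',b',a')) ) − ∑_{b'} ρ(s',b')·log(ρ(s',b')/P(s',b')) ). -/
noncomputable def evalOp {S A B : Type*} [Fintype S] [Fintype A] [Fintype B]
    (α γ : ℝ) (R : S × A × B → ℝ) (p : S → A → B → S → ℝ) (P : S → B → ℝ)
    (π : S → B → A → ℝ) (ρ : S → B → ℝ)
    (Q : S × A × B → ℝ) : S × A × B → ℝ :=
  fun x => R x + γ * ∑ s', p x.1 x.2.1 x.2.2 s' *
    ((∑ b', ρ s' b' *
        (∑ a', π s' b' a' * (Q (s', a', b') - α * Real.log (π s' b' a'))))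
      - ∑ b', ρ s' b' * Real.log (ρ s' b' / P s' b'))

/-- The improved opponent model
ρ̃(s,b) ∝ P(s,b)·exp( ∑_a π(s,b,a)·(Q(s,a,b) − α·log π(s,b,a)) ),
normalized so that ∑_b ρ̃(s,b) = 1 for every s. -/
noncomputable def improvedOpponent {S A B : Type*} [Fintype A] [Fintype B]
    (α : ℝ) (P : S → B → ℝ) (π : S → B → A → ℝ)
    (Q : S × A × B → ℝ) : S → B → ℝ :=
  fun s b =>
    P s b * Real.exp (∑ a, π s b a * (Q (s, a, b) - α * Real.log (π s b a)))
      / ∑ b', P s b' *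
          Real.exp (∑ a, π s b' a * (Q (s, a, b') - α * Real.log (π s b' a)))


lemma gibbs_le {B : Type*} [Fintype B] [Nonempty B] (P ρ V : B → ℝ)
    (hP : ∀ b, 0 < P b) (hρ : ∀ b, 0 ≤ ρ b) (hρs : ∑ b, ρ b = 1) :
    (∑ b, ρ b * V b) - ∑ b, ρ b * Real.log (ρ b / P b)
      ≤ Real.log (∑ b, P b * Real.exp (V b)) := by
  set Z := ∑ b, P b * Real.exp (V b) with hZ
  have hZpos : 0 < Z :=
    Finset.sum_pos (fun b _ => mul_pos (hP b) (Real.exp_pos _)) Finset.univ_nonempty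
  have key : ∀ b, ρ b * V b - ρ b * Real.log (ρ b / P b)
      ≤ ρ b * Real.log Z + (P b * Real.exp (V b) / Z - ρ b) := by
    intro b
    rcases eq_or_lt_of_le (hρ b) with h | h
    · rw [← h]
      simp only [zero_mul, sub_zero, zero_add, zero_sub, sub_self]
      have : 0 ≤ P b * Real.exp (V b) / Z :=
        le_of_lt (div_pos (mul_pos (hP b) (Real.exp_pos _)) hZpos)
      linarith
    · have hx : 0 < P b * Real.exp (V b) / Z / ρ b :=
        div_pos (div_pos (mul_pos (hP b) (Real.exp_pos _)) hZpos) h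
      have hlog := Real.log_le_sub_one_of_pos hx
      have hexpand : Real.log (P b * Real.exp (V b) / Z / ρ b)
          = Real.log (P b) + V b - Real.log Z - Real.log (ρ b) := by
        rw [Real.log_div (ne_of_gt (div_pos (mul_pos (hP b) (Real.exp_pos _)) hZpos)) (ne_of_gt h),
            Real.log_div (ne_of_gt (mul_pos (hP b) (Real.exp_pos _))) (ne_of_gt hZpos),
            Real.log_mul (ne_of_gt (hP b)) (Real.exp_ne_zero _), Real.log_exp]
      have hρP : Real.log (ρ b / P b) = Real.log (ρ b) - Real.log (P b) :=
        Real.log_div (ne_of_gt h) (ne_of_gt (hP b))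
      have hmul := mul_le_mul_of_nonneg_left hlog (le_of_lt h)
      rw [hexpand] at hmul
      have heq : ρ b * (P b * Real.exp (V b) / Z / ρ b - 1)
          = P b * Real.exp (V b) / Z - ρ b := by
        field_simp
      rw [heq] at hmul
      rw [hρP]
      nlinarith [hmul]
  calc (∑ b, ρ b * V b) - ∑ b, ρ b * Real.log (ρ b / P b)
      = ∑ b, (ρ b * V b - ρ b * Real.log (ρ b / P b)) := (Finset.sum_sub_distrib _ _).symm
    _ ≤ ∑ b, (ρ b * Real.log Z + (P b * Real.exp (V b) / Z - ρ b)) :=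
        Finset.sum_le_sum (fun b _ => key b)
    _ = Real.log Z := by
        rw [Finset.sum_add_distrib, Finset.sum_sub_distrib, ← Finset.sum_mul, hρs,
            ← Finset.sum_div, ← hZ, div_self (ne_of_gt hZpos)]
        ring

lemma gibbs_eq {B : Type*} [Fintype B] [Nonempty B] (P V : B → ℝ) (hP : ∀ b, 0 < P b) :
    (∑ b, P b * Real.exp (V b) / (∑ b', P b' * Real.exp (V b')) * V b)
      - ∑ b, P b * Real.exp (V b) / (∑ b', P b' * Real.exp (V b')) *
          Real.log (P b * Real.exp (V b) / (∑ b', P b' * Real.exp (V b')) / P b)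
      = Real.log (∑ b', P b' * Real.exp (V b')) := by
  set Z := ∑ b', P b' * Real.exp (V b') with hZ
  have hZpos : 0 < Z :=
    Finset.sum_pos (fun b _ => mul_pos (hP b) (Real.exp_pos _)) Finset.univ_nonempty
  have hsum : ∑ b, P b * Real.exp (V b) / Z = 1 := by
    rw [← Finset.sum_div, ← hZ, div_self (ne_of_gt hZpos)]
  have hterm : ∀ b, Real.log (P b * Real.exp (V b) / Z / P b) = V b - Real.log Z := by
    intro b
    have : P b * Real.exp (V b) / Z / P b = Real.exp (V b) / Z := by
      field_simp [ne_of_gt (hP b), ne_of_gt hZpos]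
    rw [this, Real.log_div (Real.exp_ne_zero _) (ne_of_gt hZpos), Real.log_exp]
  calc (∑ b, P b * Real.exp (V b) / Z * V b)
        - ∑ b, P b * Real.exp (V b) / Z * Real.log (P b * Real.exp (V b) / Z / P b)
      = ∑ b, P b * Real.exp (V b) / Z * Real.log Z := by
        rw [← Finset.sum_sub_distrib]
        refine Finset.sum_congr rfl fun b _ => ?_
        rw [hterm b]; ring
    _ = Real.log Z := by rw [← Finset.sum_mul, hsum, one_mul]

lemma evalOp_diff_le {S A B : Type*} [Fintype S] [Fintype A] [Fintype B]
    (α γ : ℝ) (hγ : 0 ≤ γ)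
    (R : S × A × B → ℝ) (p : S → A → B → S → ℝ)
    (hp_nonneg : ∀ s a b s', 0 ≤ p s a b s') (hp_sum : ∀ s a b, ∑ s', p s a b s' = 1)
    (P : S → B → ℝ)
    (π : S → B → A → ℝ) (hπ_nonneg : ∀ s b a, 0 ≤ π s b a) (hπ_sum : ∀ s b, ∑ a, π s b a = 1)
    (ρ' : S → B → ℝ) (hρn : ∀ s b, 0 ≤ ρ' s b) (hρs : ∀ s, ∑ b, ρ' s b = 1)
    (Q1 Q2 : S × A × B → ℝ) (c : ℝ) (h : ∀ y, Q1 y - Q2 y ≤ c) (x : S × A × B) :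
    evalOp α γ R p P π ρ' Q1 x - evalOp α γ R p P π ρ' Q2 x ≤ γ * c := by
  have key : ∀ s' : S,
      (∑ b', ρ' s' b' * (∑ a', π s' b' a' * (Q1 (s', a', b') - α * Real.log (π s' b' a'))))
      - (∑ b', ρ' s' b' * (∑ a', π s' b' a' * (Q2 (s', a', b') - α * Real.log (π s' b' a'))))
      ≤ c := by
    intro s'
    rw [← Finset.sum_sub_distrib]
    have hterm : ∀ b' : B,
        ρ' s' b' * (∑ a', π s' b' a' * (Q1 (s', a', b') - α * Real.log (π s' b' a')))
        - ρ' s' b' * (∑ a', π s' b' a' * (Q2 (s', a', b') - α * Real.log (π s' b' a')))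
        ≤ ρ' s' b' * c := by
      intro b'
      rw [← mul_sub, ← Finset.sum_sub_distrib]
      have hinner : (∑ a', (π s' b' a' * (Q1 (s', a', b') - α * Real.log (π s' b' a'))
          - π s' b' a' * (Q2 (s', a', b') - α * Real.log (π s' b' a')))) ≤ c := by
        calc (∑ a', (π s' b' a' * (Q1 (s', a', b') - α * Real.log (π s' b' a'))
              - π s' b' a' * (Q2 (s', a', b') - α * Real.log (π s' b' a'))))
            = ∑ a', π s' b' a' * (Q1 (s', a', b') - Q2 (s', a', b')) := by
              refine Finset.sum_congr rfl fun a' _ => by ring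
          _ ≤ ∑ a', π s' b' a' * c :=
              Finset.sum_le_sum fun a' _ =>
                mul_le_mul_of_nonneg_left (h _) (hπ_nonneg s' b' a')
          _ = c := by rw [← Finset.sum_mul, hπ_sum, one_mul]
      exact mul_le_mul_of_nonneg_left hinner (hρn s' b')
    calc (∑ b', (ρ' s' b' * (∑ a', π s' b' a' * (Q1 (s', a', b') - α * Real.log (π s' b' a')))
          - ρ' s' b' * (∑ a', π s' b' a' * (Q2 (s', a', b') - α * Real.log (π s' b' a')))))
        ≤ ∑ b', ρ' s' b' * c := Finset.sum_le_sum fun b' _ => hterm b'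
      _ = c := by rw [← Finset.sum_mul, hρs, one_mul]
  show R x + γ * _ - (R x + γ * _) ≤ γ * c
  rw [add_sub_add_left_eq_sub, ← mul_sub]
  refine mul_le_mul_of_nonneg_left ?_ hγ
  rw [← Finset.sum_sub_distrib]
  calc (∑ s', (p x.1 x.2.1 x.2.2 s' *
          ((∑ b', ρ' s' b' * (∑ a', π s' b' a' * (Q1 (s', a', b') - α * Real.log (π s' b' a'))))
            - ∑ b', ρ' s' b' * Real.log (ρ' s' b' / P s' b'))
        - p x.1 x.2.1 x.2.2 s' *
          ((∑ b', ρ' s' b' * (∑ a', π s' b' a' * (Q2 (s', a', b') - α * Real.log (π s' b' a'))))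
            - ∑ b', ρ' s' b' * Real.log (ρ' s' b' / P s' b'))))
      ≤ ∑ s', p x.1 x.2.1 x.2.2 s' * c := by
        refine Finset.sum_le_sum fun s' _ => ?_
        rw [← mul_sub]
        have hid : ((∑ b', ρ' s' b' * (∑ a', π s' b' a' * (Q1 (s', a', b') - α * Real.log (π s' b' a'))))
            - ∑ b', ρ' s' b' * Real.log (ρ' s' b' / P s' b'))
            - ((∑ b', ρ' s' b' * (∑ a', π s' b' a' * (Q2 (s', a', b') - α * Real.log (π s' b' a'))))
            - ∑ b', ρ' s' b' * Real.log (ρ' s' b' / P s' b'))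
            = (∑ b', ρ' s' b' * (∑ a', π s' b' a' * (Q1 (s', a', b') - α * Real.log (π s' b' a'))))
            - (∑ b', ρ' s' b' * (∑ a', π s' b' a' * (Q2 (s', a', b') - α * Real.log (π s' b' a')))) := by
          ring
        rw [hid]
        exact mul_le_mul_of_nonneg_left (key s') (hp_nonneg _ _ _ _)
    _ = c := by rw [← Finset.sum_mul, hp_sum, one_mul]

/-- Opponent model improvement theorem: if Q_{π,ρ} is the fixed point
of 𝒯_{π,ρ} and ρ̃ is the improved opponent model, then the fixed point Q_{π,ρ̃} of
𝒯_{π,ρ̃} satisfies Q_{π,ρ̃} ≥ Q_{π,ρ} pointwise. -/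
theorem opponent_model_improvement
    {S A B : Type*} [Fintype S] [Fintype A] [Fintype B]
    [Nonempty S] [Nonempty A] [Nonempty B]
    (α γ : ℝ) (hα : 0 < α) (hγ₀ : 0 ≤ γ) (hγ₁ : γ < 1)
    (R : S × A × B → ℝ)
    (p : S → A → B → S → ℝ)
    (hp_nonneg : ∀ s a b s', 0 ≤ p s a b s') (hp_sum : ∀ s a b, ∑ s', p s a b s' = 1)
    (P : S → B → ℝ) (hP_pos : ∀ s b, 0 < P s b) (hP_sum : ∀ s, ∑ b, P s b = 1)
    (π : S → B → A → ℝ)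
    (hπ_nonneg : ∀ s b a, 0 ≤ π s b a) (hπ_sum : ∀ s b, ∑ a, π s b a = 1)
    (ρ : S → B → ℝ)
    (hρ_nonneg : ∀ s b, 0 ≤ ρ s b) (hρ_sum : ∀ s, ∑ b, ρ s b = 1)
    (Qpr : S × A × B → ℝ) (hQpr : evalOp α γ R p P π ρ Qpr = Qpr)
    (Qtilde : S × A × B → ℝ)
    (hQtilde : evalOp α γ R p P π (improvedOpponent α P π Qpr) Qtilde = Qtilde) :
    ∀ x : S × A × B, Qpr x ≤ Qtilde x := by
  classical
  set ρt := improvedOpponent α P π Qpr with hρtdef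
  have hρt_eq : ∀ s b, ρt s b = P s b *
      Real.exp (∑ a, π s b a * (Qpr (s, a, b) - α * Real.log (π s b a)))
      / ∑ b', P s b' *
          Real.exp (∑ a, π s b' a * (Qpr (s, a, b') - α * Real.log (π s b' a))) :=
    fun s b => rfl
  have hZpos : ∀ s : S, 0 < ∑ b', P s b' *
      Real.exp (∑ a, π s b' a * (Qpr (s, a, b') - α * Real.log (π s b' a))) :=
    fun s => Finset.sum_pos (fun b _ => mul_pos (hP_pos s b) (Real.exp_pos _))
      Finset.univ_nonempty
  have hρt_nonneg : ∀ s b, 0 ≤ ρt s b := fun s b => by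
    rw [hρt_eq]
    exact le_of_lt (div_pos (mul_pos (hP_pos s b) (Real.exp_pos _)) (hZpos s))
  have hρt_sum : ∀ s, ∑ b, ρt s b = 1 := by
    intro s
    simp only [hρt_eq]
    rw [← Finset.sum_div, div_self (ne_of_gt (hZpos s))]
  -- Step 1: Qpr ≤ T_{π,ρt} Qpr pointwise
  have step1 : ∀ x, Qpr x ≤ evalOp α γ R p P π ρt Qpr x := by
    intro x
    conv_lhs => rw [← hQpr]
    unfold evalOp
    refine add_le_add le_rfl ?_
    refine mul_le_mul_of_nonneg_left ?_ hγ₀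
    refine Finset.sum_le_sum fun s' _ => ?_
    refine mul_le_mul_of_nonneg_left ?_ (hp_nonneg _ _ _ _)
    have h1 := gibbs_le (P s') (ρ s')
      (fun b => ∑ a, π s' b a * (Qpr (s', a, b) - α * Real.log (π s' b a)))
      (hP_pos s') (hρ_nonneg s') (hρ_sum s')
    have h2 := gibbs_eq (P s')
      (fun b => ∑ a, π s' b a * (Qpr (s', a, b) - α * Real.log (π s' b a)))
      (hP_pos s')
    exact h1.trans (le_of_eq h2.symm)
  -- Step 2: contraction argument
  have hne : (Finset.univ : Finset (S × A × B)).Nonempty := Finset.univ_nonempty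
  set M := Finset.univ.sup' hne (fun x : S × A × B => Qpr x - Qtilde x) with hM
  have hfle : ∀ x : S × A × B, Qpr x - Qtilde x ≤ M := by
    intro x
    rw [hM]
    exact Finset.le_sup' (fun x : S × A × B => Qpr x - Qtilde x) (Finset.mem_univ x)
  obtain ⟨x0, -, hx0⟩ :=
    Finset.exists_mem_eq_sup' hne (fun x : S × A × B => Qpr x - Qtilde x)
  have hdiff : evalOp α γ R p P π ρt Qpr x0 - evalOp α γ R p P π ρt Qtilde x0 ≤ γ * M :=
    evalOp_diff_le α γ hγ₀ R p hp_nonneg hp_sum P π hπ_nonneg hπ_sum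
      ρt hρt_nonneg hρt_sum Qpr Qtilde M hfle x0
  have hMle : M ≤ γ * M := by
    have h2 : evalOp α γ R p P π ρt Qtilde x0 = Qtilde x0 := congrFun hQtilde x0
    have h1 := step1 x0
    have := hx0
    linarith [hdiff]
  have hM0 : M ≤ 0 := by nlinarith
  intro x
  linarith [hfle x]
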